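/- Fix S ⊆ {1..n}. Under the model y = X^T w* + ξ with E[ξ] = 0, Var[ξ] ⪯ σ²I, and assuming λ ≤ σ²/‖w*‖², the ridge estimator ŵ_S = (X_S X_S^T + λI)^{-1} X_S y_S satisfies E_ξ‖ŵ_S − w*‖² ≤ σ²·tr((X_S X_S^T + λI)^{-1}). -/

import Mathlib

open Matrix MeasureTheory

/-- The regularized Gram matrix `X_S X_Sᵀ + λ I = ∑_{i∈S} x_i x_iᵀ + λ I`. -/
noncomputable def regGram {d n : ℕ} (X : Matrix (Fin d) (Fin n) ℝ) (lam : ℝ)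
    (S : Finset (Fin n)) : Matrix (Fin d) (Fin d) ℝ :=
  ∑ i ∈ S, Matrix.vecMulVec (fun k => X k i) (fun k => X k i) + lam • 1

/-- The ridge estimator on the subproblem `(X_S, y_S)`:
`ŵ_S = (X_S X_Sᵀ + λI)⁻¹ X_S y_S = (X_S X_Sᵀ + λI)⁻¹ ∑_{i∈S} y_i x_i`. -/
noncomputable def ridgeEst {d n : ℕ} (X : Matrix (Fin d) (Fin n) ℝ) (lam : ℝ)
    (S : Finset (Fin n)) (y : Fin n → ℝ) : Fin d → ℝ :=
  (regGram X lam S)⁻¹ *ᵥ (∑ i ∈ S, y i • (fun k => X k i))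

lemma vecMulVec_mulVec' {d : ℕ} (u v z : Fin d → ℝ) :
    Matrix.vecMulVec u v *ᵥ z = (v ⬝ᵥ z) • u := by
  ext k
  simp only [Matrix.vecMulVec, Matrix.mulVec, dotProduct, Matrix.of_apply, Pi.smul_apply,
    smul_eq_mul, Finset.mul_sum]
  rw [Finset.sum_mul]
  exact Finset.sum_congr rfl fun j _ => by ring

lemma sum_mulVec' {d n : ℕ} (s : Finset (Fin n)) (M : Fin n → Matrix (Fin d) (Fin d) ℝ) (z : Fin d → ℝ) :
    (∑ i ∈ s, M i) *ᵥ z = ∑ i ∈ s, (M i *ᵥ z) := by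
  ext k
  rw [Finset.sum_apply]
  simp only [Matrix.mulVec, dotProduct, Matrix.sum_apply, Finset.sum_mul]
  rw [Finset.sum_comm]

lemma mulVec_sum' {d n : ℕ} (B : Matrix (Fin d) (Fin d) ℝ) (s : Finset (Fin n))
    (v : Fin n → Fin d → ℝ) : B *ᵥ (∑ i ∈ s, v i) = ∑ i ∈ s, B *ᵥ v i := by
  ext k
  rw [Finset.sum_apply]
  simp only [Matrix.mulVec, dotProduct, Finset.sum_apply, Finset.mul_sum]
  rw [Finset.sum_comm]

lemma trace_BB_vecMulVec {d : ℕ} (B : Matrix (Fin d) (Fin d) ℝ)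
    (hBsym : ∀ a b, B a b = B b a) (u : Fin d → ℝ) :
    Matrix.trace ((B * B) * Matrix.vecMulVec u u) = ∑ k, ((B *ᵥ u) k)^2 := by
  have lhs : Matrix.trace ((B * B) * Matrix.vecMulVec u u)
      = ∑ k, ∑ j, ∑ l, B l k * B l j * (u j * u k) := by
    rw [Matrix.trace]
    simp only [Matrix.diag_apply, Matrix.mul_apply, Matrix.vecMulVec, Matrix.of_apply]
    refine Finset.sum_congr rfl fun k _ => Finset.sum_congr rfl fun j _ => ?_
    rw [Finset.sum_mul]
    exact Finset.sum_congr rfl fun l _ => by rw [hBsym k l]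
  have rhs : ∑ k, ((B *ᵥ u) k)^2 = ∑ k, ∑ j, ∑ l, B k j * B k l * (u j * u l) := by
    refine Finset.sum_congr rfl fun k _ => ?_
    rw [sq, Matrix.mulVec, dotProduct, Finset.sum_mul_sum]
    exact Finset.sum_congr rfl fun j _ => Finset.sum_congr rfl fun l _ => by ring
  rw [lhs, rhs]
  calc ∑ k, ∑ j, ∑ l, B l k * B l j * (u j * u k)
      = ∑ j, ∑ k, ∑ l, B l k * B l j * (u j * u k) := Finset.sum_comm
    _ = ∑ j, ∑ l, ∑ k, B l k * B l j * (u j * u k) :=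
        Finset.sum_congr rfl fun j _ => Finset.sum_comm
    _ = ∑ l, ∑ j, ∑ k, B l k * B l j * (u j * u k) := Finset.sum_comm
    _ = ∑ k, ∑ j, ∑ l, B k j * B k l * (u j * u l) := by
        refine Finset.sum_congr rfl fun a _ => Finset.sum_congr rfl fun b _ =>
          Finset.sum_congr rfl fun c _ => by ring

/-- MSE bound for fixed `S`: under `y = Xᵀw* + ξ`, `E[ξ]=0`, `Var[ξ] ⪯ σ²I` and
`λ ≤ σ²/‖w*‖²`, we have `E_ξ‖ŵ_S − w*‖² ≤ σ²·tr((X_S X_Sᵀ + λI)⁻¹)`. -/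
theorem ridge_mse_fixed_subset
    (d n : ℕ) (X : Matrix (Fin d) (Fin n) ℝ) (w : Fin d → ℝ) (lam σ : ℝ)
    (hlam : 0 < lam) (hreg : lam * (∑ k, w k ^ 2) ≤ σ ^ 2)
    {Ω : Type} [MeasurableSpace Ω] (μ : Measure Ω) [IsProbabilityMeasure μ]
    (ξ : Ω → Fin n → ℝ)
    (hint : ∀ i, Integrable (fun ω => ξ ω i) μ)
    (hint2 : ∀ i j, Integrable (fun ω => ξ ω i * ξ ω j) μ)
    (hmean : ∀ i, ∫ ω, ξ ω i ∂μ = 0)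
    (hvar : ∀ u : Fin n → ℝ, ∫ ω, (ξ ω ⬝ᵥ u) ^ 2 ∂μ ≤ σ ^ 2 * (u ⬝ᵥ u))
    (S : Finset (Fin n)) :
    ∫ ω, (∑ k, (ridgeEst X lam S (fun i => (Xᵀ *ᵥ w) i + ξ ω i) k - w k) ^ 2) ∂μ
      ≤ σ ^ 2 * ((regGram X lam S)⁻¹).trace := by
  classical
  set A := regGram X lam S with hAdef
  have hAexp : A = ∑ i ∈ S, Matrix.vecMulVec (fun k => X k i) (fun k => X k i) + lam • 1 := rfl
  -- symmetry of A
  have hAsymT : Aᵀ = A := by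
    rw [hAexp]
    ext a b
    simp only [Matrix.transpose_apply, Matrix.add_apply, Matrix.sum_apply, Matrix.smul_apply,
      Matrix.one_apply, Matrix.vecMulVec, Matrix.of_apply, smul_eq_mul]
    congr 1
    · exact Finset.sum_congr rfl fun i _ => mul_comm _ _
    · simp [eq_comm]
  -- positive definiteness and invertibility
  have hPD : A.PosDef := by
    rw [Matrix.posDef_iff_dotProduct_mulVec]
    constructor
    · show Aᴴ = A
      rw [show Aᴴ = Aᵀ from rfl, hAsymT]
    · intro v hv
      have hAv : A *ᵥ v = ∑ i ∈ S, ((fun k => X k i) ⬝ᵥ v) • (fun k => X k i) + lam • v := by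
        rw [hAexp, Matrix.add_mulVec, sum_mulVec', Matrix.smul_mulVec, Matrix.one_mulVec]
        congr 1
        exact Finset.sum_congr rfl fun i _ => vecMulVec_mulVec' _ _ _
      have heq : star v ⬝ᵥ A *ᵥ v = ∑ i ∈ S, ((fun k => X k i) ⬝ᵥ v)^2 + lam * (v ⬝ᵥ v) := by
        rw [hAv]
        simp only [star_trivial, dotProduct_add]
        congr 1
        · rw [show (∑ i ∈ S, ((fun k => X k i) ⬝ᵥ v) • (fun k => X k i))
              = (fun j => ∑ i ∈ S, ((fun k => X k i) ⬝ᵥ v) * X j i) by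
            ext j; simp [Finset.sum_apply]]
          simp only [dotProduct, Finset.mul_sum]
          rw [Finset.sum_comm]
          refine Finset.sum_congr rfl fun i _ => ?_
          rw [sq]
          simp only [dotProduct, ← Finset.sum_mul, Finset.mul_sum]
          refine Finset.sum_congr rfl fun j _ => by ring
        · simp [dotProduct_smul, smul_eq_mul]
      rw [heq]
      have h1 : 0 < v ⬝ᵥ v := by
        have h : v ⬝ᵥ v = ∑ k, (v k)^2 := by simp [dotProduct, sq]
        rw [h]
        refine Finset.sum_pos' (fun k _ => sq_nonneg _) ?_
        obtain ⟨k, hk⟩ := Function.ne_iff.mp hv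
        exact ⟨k, Finset.mem_univ k, by have : v k ≠ 0 := hk; positivity⟩
      have h2 : 0 ≤ ∑ i ∈ S, ((fun k => X k i) ⬝ᵥ v)^2 :=
        Finset.sum_nonneg fun i _ => sq_nonneg _
      nlinarith
  have hdet : IsUnit A.det := hPD.det_pos.ne'.isUnit
  set B := A⁻¹ with hBdef
  have hBA : B * A = 1 := Matrix.nonsing_inv_mul A hdet
  have hBsym : Bᵀ = B := by rw [hBdef, Matrix.transpose_nonsing_inv, hAsymT]
  have hBsym' : ∀ a b, B a b = B b a := by
    intro a b
    conv_rhs => rw [← hBsym]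
    rfl
  set b := B *ᵥ w with hbdef
  set g : Fin d → Fin n → ℝ := fun k i => if i ∈ S then (B *ᵥ (fun j => X j i)) k else 0 with hgdef
  -- pointwise formula for the estimator error
  have hpoint : ∀ ω k, ridgeEst X lam S (fun i => (Xᵀ *ᵥ w) i + ξ ω i) k - w k
      = ξ ω ⬝ᵥ g k - lam * b k := by
    intro ω k
    have h1 : ∀ i : Fin n, (Xᵀ *ᵥ w) i = (fun j => X j i) ⬝ᵥ w := fun i => rfl
    have h2 : A *ᵥ w = (∑ i ∈ S, ((fun j => X j i) ⬝ᵥ w) • (fun j => X j i)) + lam • w := by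
      rw [hAexp, Matrix.add_mulVec, sum_mulVec', Matrix.smul_mulVec, Matrix.one_mulVec]
      congr 1
      exact Finset.sum_congr rfl fun i _ => vecMulVec_mulVec' _ _ _
    have hsum : (∑ i ∈ S, ((Xᵀ *ᵥ w) i + ξ ω i) • (fun j => X j i))
        = (A *ᵥ w - lam • w) + ∑ i ∈ S, ξ ω i • (fun j => X j i) := by
      rw [h2, add_sub_cancel_right, ← Finset.sum_add_distrib]
      exact Finset.sum_congr rfl fun i _ => by rw [h1, add_smul]
    have hest : ridgeEst X lam S (fun i => (Xᵀ *ᵥ w) i + ξ ω i)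
        = (w - lam • b) + ∑ i ∈ S, ξ ω i • (B *ᵥ (fun j => X j i)) := by
      show B *ᵥ (∑ i ∈ S, ((Xᵀ *ᵥ w) i + ξ ω i) • (fun j => X j i)) = _
      rw [hsum, Matrix.mulVec_add, Matrix.mulVec_sub, Matrix.mulVec_smul, Matrix.mulVec_mulVec,
        hBA, Matrix.one_mulVec, mulVec_sum']
      congr 1
      exact Finset.sum_congr rfl fun i _ => (Matrix.mulVec_smul _ _ _)
    have hcomp : (∑ i ∈ S, ξ ω i • (B *ᵥ (fun j => X j i))) k = ξ ω ⬝ᵥ g k := by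
      rw [Finset.sum_apply, dotProduct]
      rw [← Finset.sum_subset (Finset.subset_univ S)
        (fun i _ hi => by simp only [hgdef]; rw [if_neg hi, mul_zero])]
      exact Finset.sum_congr rfl fun i hi => by
        simp only [hgdef, Pi.smul_apply, smul_eq_mul]; rw [if_pos hi]
    rw [hest]
    simp only [Pi.add_apply, Pi.sub_apply, Pi.smul_apply, smul_eq_mul]
    rw [hcomp]
    ring
  -- integrability facts
  have hIdot : ∀ a : Fin n → ℝ, Integrable (fun ω => ξ ω ⬝ᵥ a) μ := fun a =>
    integrable_finset_sum _ fun i _ => (hint i).mul_const _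
  have hIdot2 : ∀ a : Fin n → ℝ, Integrable (fun ω => (ξ ω ⬝ᵥ a)^2) μ := by
    intro a
    have h : (fun ω => (ξ ω ⬝ᵥ a)^2) = fun ω => ∑ i, ∑ j, a i * a j * (ξ ω i * ξ ω j) := by
      funext ω
      rw [sq, dotProduct, Finset.sum_mul_sum]
      exact Finset.sum_congr rfl fun i _ => Finset.sum_congr rfl fun j _ => by ring
    rw [h]
    exact integrable_finset_sum _ fun i _ => integrable_finset_sum _ fun j _ =>
      (hint2 i j).const_mul _
  have hIerr : ∀ (a : Fin n → ℝ) (c : ℝ), Integrable (fun ω => (ξ ω ⬝ᵥ a - c)^2) μ := by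
    intro a c
    have h : (fun ω => (ξ ω ⬝ᵥ a - c)^2)
        = fun ω => (ξ ω ⬝ᵥ a)^2 + ((-2*c) * (ξ ω ⬝ᵥ a) + c^2) := by
      funext ω; ring
    rw [h]
    exact (hIdot2 a).add (((hIdot a).const_mul _).add (integrable_const _))
  have hmean' : ∀ a : Fin n → ℝ, ∫ ω, ξ ω ⬝ᵥ a ∂μ = 0 := by
    intro a
    rw [show (fun ω => ξ ω ⬝ᵥ a) = fun ω => ∑ i, ξ ω i * a i from rfl,
      integral_finset_sum _ fun i _ => (hint i).mul_const _]
    refine Finset.sum_eq_zero fun i _ => ?_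
    rw [integral_mul_const, hmean i, zero_mul]
  -- per-coordinate bound
  have hk : ∀ (a : Fin n → ℝ) (c : ℝ),
      ∫ ω, (ξ ω ⬝ᵥ a - c)^2 ∂μ ≤ σ^2 * (a ⬝ᵥ a) + c^2 := by
    intro a c
    have h : (fun ω => (ξ ω ⬝ᵥ a - c)^2)
        = fun ω => (ξ ω ⬝ᵥ a)^2 + ((-2*c) * (ξ ω ⬝ᵥ a) + c^2) := by
      funext ω; ring
    rw [h]
    have e2 : ∫ ω, (-2*c * (ξ ω ⬝ᵥ a) + c^2) ∂μ = (-2*c) * (∫ ω, ξ ω ⬝ᵥ a ∂μ) + c^2 := by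
      rw [integral_add (f := fun ω => -2*c * (ξ ω ⬝ᵥ a)) (g := fun _ => c^2)
        (by exact (hIdot a).const_mul _) (integrable_const _), integral_const_mul, integral_const]
      simp
    have e1 : ∫ ω, ((ξ ω ⬝ᵥ a)^2 + (-2*c * (ξ ω ⬝ᵥ a) + c^2)) ∂μ
        = (∫ ω, (ξ ω ⬝ᵥ a)^2 ∂μ) + ∫ ω, (-2*c * (ξ ω ⬝ᵥ a) + c^2) ∂μ :=
      integral_add (hIdot2 a) (by exact ((hIdot a).const_mul _).add (integrable_const _))
    rw [e1, e2, hmean' a, mul_zero, zero_add]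
    have := hvar a
    linarith
  -- rewrite the integral
  have hmain : ∫ ω, (∑ k, (ridgeEst X lam S (fun i => (Xᵀ *ᵥ w) i + ξ ω i) k - w k) ^ 2) ∂μ
      = ∑ k, ∫ ω, (ξ ω ⬝ᵥ g k - lam * b k)^2 ∂μ := by
    rw [show (fun ω => ∑ k, (ridgeEst X lam S (fun i => (Xᵀ *ᵥ w) i + ξ ω i) k - w k) ^ 2)
        = fun ω => ∑ k, (ξ ω ⬝ᵥ g k - lam * b k)^2 from
      funext fun ω => Finset.sum_congr rfl fun k _ => by rw [hpoint ω k]]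
    exact integral_finset_sum _ fun k _ => hIerr _ _
  rw [hmain]
  have hstep : ∑ k, ∫ ω, (ξ ω ⬝ᵥ g k - lam * b k)^2 ∂μ
      ≤ ∑ k, (σ^2 * (g k ⬝ᵥ g k) + (lam * b k)^2) :=
    Finset.sum_le_sum fun k _ => hk (g k) (lam * b k)
  refine le_trans hstep ?_
  -- final algebra
  set T2 : ℝ := Matrix.trace (B * B) with hT2def
  have hkey : B * B * A = B := by rw [mul_assoc, hBA, mul_one]
  have htr : Matrix.trace B
      = (∑ i ∈ S, ∑ k, ((B *ᵥ (fun j => X j i)) k)^2) + lam * T2 := by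
    conv_lhs => rw [← hkey]
    rw [hAexp, mul_add, Matrix.trace_add, Finset.mul_sum, Matrix.trace_sum]
    congr 1
    · exact Finset.sum_congr rfl fun i _ => trace_BB_vecMulVec B hBsym' _
    · rw [mul_smul_comm, mul_one, Matrix.trace_smul, smul_eq_mul]
  have hgg : ∑ k, g k ⬝ᵥ g k = ∑ i ∈ S, ∑ k, ((B *ᵥ (fun j => X j i)) k)^2 := by
    have h : ∀ k, g k ⬝ᵥ g k = ∑ i ∈ S, ((B *ᵥ (fun j => X j i)) k)^2 := by
      intro k
      rw [dotProduct]
      rw [← Finset.sum_subset (Finset.subset_univ S)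
        (fun i _ hi => by simp only [hgdef]; rw [if_neg hi, mul_zero])]
      exact Finset.sum_congr rfl fun i hi => by
        simp only [hgdef]; rw [if_pos hi, sq]
    rw [Finset.sum_congr rfl fun k _ => h k]
    exact Finset.sum_comm
  have hT2sq : T2 = ∑ k, ∑ j, (B k j)^2 := by
    rw [hT2def, Matrix.trace]
    simp only [Matrix.diag_apply, Matrix.mul_apply]
    exact Finset.sum_congr rfl fun k _ => Finset.sum_congr rfl fun j _ => by
      rw [hBsym' j k]; ring
  have hT2nn : 0 ≤ T2 := by
    rw [hT2sq]
    exact Finset.sum_nonneg fun k _ => Finset.sum_nonneg fun j _ => sq_nonneg _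
  have hbias : ∑ k, (b k)^2 ≤ (∑ j, w j ^ 2) * T2 := by
    have h : ∀ k, (b k)^2 ≤ (∑ j, (B k j)^2) * (∑ j, w j ^ 2) := by
      intro k
      have : b k = ∑ j, B k j * w j := rfl
      rw [this]
      exact Finset.sum_mul_sq_le_sq_mul_sq _ _ _
    calc ∑ k, (b k)^2 ≤ ∑ k, (∑ j, (B k j)^2) * (∑ j, w j ^ 2) :=
          Finset.sum_le_sum fun k _ => h k
      _ = (∑ j, w j ^ 2) * T2 := by
          rw [hT2sq, ← Finset.sum_mul, mul_comm]
  have hvarsum : ∑ k, g k ⬝ᵥ g k = Matrix.trace B - lam * T2 := by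
    rw [hgg]; linarith [htr]
  have hσnn : 0 ≤ σ^2 := sq_nonneg σ
  have hw2nn : 0 ≤ ∑ j, w j ^ 2 := Finset.sum_nonneg fun j _ => sq_nonneg _
  have expand : ∑ k, (σ^2 * (g k ⬝ᵥ g k) + (lam * b k)^2)
      = σ^2 * (∑ k, g k ⬝ᵥ g k) + lam^2 * ∑ k, (b k)^2 := by
    rw [Finset.sum_add_distrib, ← Finset.mul_sum]
    congr 1
    rw [Finset.mul_sum]
    exact Finset.sum_congr rfl fun k _ => by ring
  rw [expand, hvarsum]
  have hb2 : lam^2 * (∑ k, (b k)^2) ≤ lam * σ^2 * T2 := by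
    have h1 : lam^2 * (∑ k, (b k)^2) ≤ lam^2 * ((∑ j, w j ^ 2) * T2) :=
      mul_le_mul_of_nonneg_left hbias (sq_nonneg lam)
    have h2 : lam^2 * ((∑ j, w j ^ 2) * T2) ≤ lam * σ^2 * T2 := by
      have : lam * (lam * (∑ j, w j ^ 2)) ≤ lam * σ^2 :=
        mul_le_mul_of_nonneg_left hreg hlam.le
      nlinarith
    linarith
  nlinarith [mul_le_mul_of_nonneg_left hT2nn hσnn]
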